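/- arXiv:2401.08466 — 2 statements merged into one kernel-verified Lean document; each statement's English description precedes it below -/
import Mathlib

section
/- Let H be a finite bipartite graph on vertex set L ⊔ R, and let L* ⊆ L and R* ⊆ R. Then there exists a partial matching on H covering both L* and R* if and only if for every subset A ⊆ L* and every subset A ⊆ R*, we have |μ(A)| ≥ |A|, where μ(A) is the set of vertices adjacent to at least one vertex of A. -/
open scoped Classical

section Aux

variable {L R : Type*}

/-- The set of right vertices that must be matched via `g` (Schröder–Bernstein style). -/
inductive Bm (Ls : Finset L) (Rs : Finset R) (f : L → R) (g : R → L) : R → Prop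
  | base (r : R) (hr : r ∈ Rs) (h : ∀ l ∈ Ls, f l ≠ r) : Bm Ls Rs f g r
  | step (r : R) (hb : Bm Ls Rs f g r) (h1 : g r ∈ Ls) (h2 : f (g r) ∈ Rs) :
      Bm Ls Rs f g (f (g r))

lemma Bm_mem {Ls : Finset L} {Rs : Finset R} {f : L → R} {g : R → L} {r : R}
    (h : Bm Ls Rs f g r) : r ∈ Rs := by
  induction h with
  | base r hr _ => exact hr
  | step r hb h1 h2 => exact h2

lemma Bm_key_aux {Ls : Finset L} {Rs : Finset R} {f : L → R} {g : R → L}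
    (hf : Set.InjOn f Ls) {r0 : R} (h : Bm Ls Rs f g r0) :
    ∀ l ∈ Ls, f l = r0 → ∃ r, Bm Ls Rs f g r ∧ g r = l := by
  induction h with
  | base r hr hne => exact fun l hl hfl => absurd hfl (hne l hl)
  | step r hb h1 h2 ih =>
    intro l hl hfl
    exact ⟨r, hb, (hf hl h1 hfl).symm⟩

lemma Bm_key {Ls : Finset L} {Rs : Finset R} {f : L → R} {g : R → L}
    (hf : Set.InjOn f Ls) {l : L} (hl : l ∈ Ls) (h : Bm Ls Rs f g (f l)) :
    ∃ r, Bm Ls Rs f g r ∧ g r = l :=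
  Bm_key_aux hf h l hl rfl

lemma combine [Fintype L] [Fintype R] (E : L → R → Prop) (Ls : Finset L) (Rs : Finset R)
    (f : L → R) (g : R → L)
    (hfE : ∀ l ∈ Ls, E l (f l)) (hgE : ∀ r ∈ Rs, E (g r) r)
    (hf : Set.InjOn f Ls) (hg : Set.InjOn g Rs) :
    ∃ M : Finset (L × R),
        (∀ p ∈ M, E p.1 p.2) ∧
        (∀ p ∈ M, ∀ q ∈ M, p ≠ q → p.1 ≠ q.1 ∧ p.2 ≠ q.2) ∧
        (∀ l ∈ Ls, ∃ r, (l, r) ∈ M) ∧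
        (∀ r ∈ Rs, ∃ l, (l, r) ∈ M) := by
  set B : R → Prop := Bm Ls Rs f g with hB
  refine ⟨Finset.univ.filter (fun p : L × R =>
      (B p.2 ∧ p.1 = g p.2) ∨
      (p.1 ∈ Ls ∧ (∀ r, B r → g r ≠ p.1) ∧ p.2 = f p.1)), ?_, ?_, ?_, ?_⟩
  · rintro ⟨l, r⟩ hp
    simp only [Finset.mem_filter] at hp
    rcases hp.2 with ⟨hb, rfl⟩ | ⟨hl, _, rfl⟩
    · exact hgE r (Bm_mem hb)
    · exact hfE l hl
  · rintro ⟨l, r⟩ hp ⟨l', r'⟩ hq hne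
    simp only [Finset.mem_filter] at hp hq
    rcases hp.2 with ⟨hb, rfl⟩ | ⟨hl, hnb, rfl⟩ <;>
      rcases hq.2 with ⟨hb', rfl⟩ | ⟨hl', hnb', rfl⟩
    · have hrr : r ≠ r' := by rintro rfl; exact hne rfl
      exact ⟨fun h => hrr (hg (Bm_mem hb) (Bm_mem hb') h), hrr⟩
    · constructor
      · intro h
        exact hnb' r hb h
      · intro h
        have h2 : r = f l' := h
        rw [h2] at hb
        obtain ⟨r0, hr0, hgr0⟩ := Bm_key hf hl' hb
        exact hnb' r0 hr0 hgr0
    · constructor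
      · intro h
        exact hnb r' hb' ((show l = g r' from h)).symm
      · intro h
        have h2 : f l = r' := h
        rw [← h2] at hb'
        obtain ⟨r0, hr0, hgr0⟩ := Bm_key hf hl hb'
        exact hnb r0 hr0 hgr0
    · have hll : l ≠ l' := by rintro rfl; exact hne rfl
      exact ⟨hll, fun h => hll (hf hl hl' h)⟩
  · intro l hl
    by_cases h : ∃ r, B r ∧ g r = l
    · obtain ⟨r, hr, rfl⟩ := h
      exact ⟨r, Finset.mem_filter.2 ⟨Finset.mem_univ _, Or.inl ⟨hr, rfl⟩⟩⟩
    · push_neg at h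
      exact ⟨f l, Finset.mem_filter.2 ⟨Finset.mem_univ _, Or.inr ⟨hl, fun r hr => h r hr, rfl⟩⟩⟩
  · intro r hr
    by_cases h : B r
    · exact ⟨g r, Finset.mem_filter.2 ⟨Finset.mem_univ _, Or.inl ⟨h, rfl⟩⟩⟩
    · have hex : ∃ l ∈ Ls, f l = r := by
        by_contra hc
        push_neg at hc
        exact h (Bm.base r hr hc)
      obtain ⟨l, hl, rfl⟩ := hex
      refine ⟨l, Finset.mem_filter.2 ⟨Finset.mem_univ _, Or.inr ⟨hl, ?_, rfl⟩⟩⟩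
      intro r0 hr0 hgr0
      have hgr0' : g r0 = l := hgr0
      have := Bm.step (Ls := Ls) (Rs := Rs) (f := f) (g := g) r0 hr0
        (hgr0' ▸ hl) (by rw [hgr0']; exact hr)
      rw [hgr0'] at this
      exact h this

end Aux

/-- Hall's theorem for two-sided covers: in a finite bipartite graph on `L ⊔ R` with edge
relation `E`, and subsets `L* ⊆ L`, `R* ⊆ R`, there exists a partial matching covering both
`L*` and `R*` iff every subset `A` of `L*` or of `R*` satisfies `|μ(A)| ≥ |A|`. -/
theorem stmt4 {L R : Type*} [Fintype L] [Fintype R] (E : L → R → Prop)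
    (Lstar : Finset L) (Rstar : Finset R) :
    (∃ M : Finset (L × R),
        (∀ p ∈ M, E p.1 p.2) ∧
        (∀ p ∈ M, ∀ q ∈ M, p ≠ q → p.1 ≠ q.1 ∧ p.2 ≠ q.2) ∧
        (∀ l ∈ Lstar, ∃ r, (l, r) ∈ M) ∧
        (∀ r ∈ Rstar, ∃ l, (l, r) ∈ M)) ↔
      ((∀ A ⊆ Lstar, A.card ≤ (Finset.univ.filter fun r => ∃ l ∈ A, E l r).card) ∧
       (∀ A ⊆ Rstar, A.card ≤ (Finset.univ.filter fun l => ∃ r ∈ A, E l r).card)) := by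
  constructor
  · rintro ⟨M, hME, hMdisj, hML, hMR⟩
    constructor
    · intro A hA
      rcases A.eq_empty_or_nonempty with rfl | ⟨a0, ha0⟩
      · simp
      · obtain ⟨r0, _⟩ := hML a0 (hA ha0)
        have hpick : ∀ a ∈ A, ∃ r, (a, r) ∈ M := fun a ha => hML a (hA ha)
        refine Finset.card_le_card_of_injOn
          (fun a => if h : ∃ r, (a, r) ∈ M then h.choose else r0) ?_ ?_
        · intro a ha
          have h := hpick a ha
          simp only [dif_pos h, Finset.mem_coe, Finset.mem_filter, Finset.mem_univ, true_and]
          exact ⟨a, ha, hME _ h.choose_spec⟩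
        · intro a ha b hb hab
          by_contra hne
          have ha' := hpick a ha
          have hb' := hpick b hb
          simp only [dif_pos ha', dif_pos hb'] at hab
          have := hMdisj _ ha'.choose_spec _ hb'.choose_spec (by simp [hne])
          exact this.2 hab
    · intro A hA
      rcases A.eq_empty_or_nonempty with rfl | ⟨a0, ha0⟩
      · simp
      · obtain ⟨l0, _⟩ := hMR a0 (hA ha0)
        have hpick : ∀ a ∈ A, ∃ l, (l, a) ∈ M := fun a ha => hMR a (hA ha)
        refine Finset.card_le_card_of_injOn
          (fun a => if h : ∃ l, (l, a) ∈ M then h.choose else l0) ?_ ?_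
        · intro a ha
          have h := hpick a ha
          simp only [dif_pos h, Finset.mem_coe, Finset.mem_filter, Finset.mem_univ, true_and]
          exact ⟨a, ha, hME _ h.choose_spec⟩
        · intro a ha b hb hab
          by_contra hne
          have ha' := hpick a ha
          have hb' := hpick b hb
          simp only [dif_pos ha', dif_pos hb'] at hab
          have := hMdisj _ ha'.choose_spec _ hb'.choose_spec (by simp [hne])
          exact this.1 hab
  · rintro ⟨hL, hR⟩
    -- Hall for Lstar
    have hHallL : ∃ f : {l // l ∈ Lstar} → R, Function.Injective f ∧
        ∀ x : {l // l ∈ Lstar}, f x ∈ Finset.univ.filter (fun r => E x.1 r) := by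
      rw [← Finset.all_card_le_biUnion_card_iff_exists_injective]
      intro s
      have : s.card = (s.image Subtype.val).card :=
        (Finset.card_image_of_injective s Subtype.val_injective).symm
      rw [this]
      refine le_trans (hL (s.image Subtype.val) ?_) (Finset.card_le_card ?_)
      · intro x hx
        simp only [Finset.mem_image] at hx
        obtain ⟨y, _, rfl⟩ := hx
        exact y.2
      · intro r hr
        simp only [Finset.mem_filter, Finset.mem_univ, true_and, Finset.mem_image] at hr
        obtain ⟨l, ⟨y, hy, rfl⟩, hE⟩ := hr
        exact Finset.mem_biUnion.2 ⟨y, hy, by simp [hE]⟩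
    have hHallR : ∃ g : {r // r ∈ Rstar} → L, Function.Injective g ∧
        ∀ x : {r // r ∈ Rstar}, g x ∈ Finset.univ.filter (fun l => E l x.1) := by
      rw [← Finset.all_card_le_biUnion_card_iff_exists_injective]
      intro s
      have : s.card = (s.image Subtype.val).card :=
        (Finset.card_image_of_injective s Subtype.val_injective).symm
      rw [this]
      refine le_trans (hR (s.image Subtype.val) ?_) (Finset.card_le_card ?_)
      · intro x hx
        simp only [Finset.mem_image] at hx
        obtain ⟨y, _, rfl⟩ := hx
        exact y.2
      · intro l hl
        simp only [Finset.mem_filter, Finset.mem_univ, true_and, Finset.mem_image] at hl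
        obtain ⟨r, ⟨y, hy, rfl⟩, hE⟩ := hl
        exact Finset.mem_biUnion.2 ⟨y, hy, by simp [hE]⟩
    obtain ⟨f0, hf0inj, hf0⟩ := hHallL
    obtain ⟨g0, hg0inj, hg0⟩ := hHallR
    rcases isEmpty_or_nonempty R with hRE | hRN
    · have : Lstar = ∅ := Finset.eq_empty_of_forall_notMem (fun l hl => (hRE.false (f0 ⟨l, hl⟩)))
      subst this
      have : Rstar = ∅ := Finset.eq_empty_of_forall_notMem (fun r _ => hRE.false r)
      subst this
      exact ⟨∅, by simp, by simp, by simp, by simp⟩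
    rcases isEmpty_or_nonempty L with hLE | hLN
    · have : Rstar = ∅ := Finset.eq_empty_of_forall_notMem (fun r hr => (hLE.false (g0 ⟨r, hr⟩)))
      subst this
      have : Lstar = ∅ := Finset.eq_empty_of_forall_notMem (fun l _ => hLE.false l)
      subst this
      exact ⟨∅, by simp, by simp, by simp, by simp⟩
    set f : L → R := fun l => if h : l ∈ Lstar then f0 ⟨l, h⟩ else Classical.arbitrary R with hfdef
    set g : R → L := fun r => if h : r ∈ Rstar then g0 ⟨r, h⟩ else Classical.arbitrary L with hgdef
    refine combine E Lstar Rstar f g ?_ ?_ ?_ ?_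
    · intro l hl
      have := hf0 ⟨l, hl⟩
      simp only [Finset.mem_filter, Finset.mem_univ, true_and] at this
      simpa [hfdef, dif_pos hl] using this
    · intro r hr
      have := hg0 ⟨r, hr⟩
      simp only [Finset.mem_filter, Finset.mem_univ, true_and] at this
      simpa [hgdef, dif_pos hr] using this
    · intro a ha b hb hab
      simp only [Finset.mem_coe] at ha hb
      simp only [hfdef, dif_pos ha, dif_pos hb] at hab
      exact Subtype.ext_iff.mp (hf0inj hab)
    · intro a ha b hb hab
      simp only [Finset.mem_coe] at ha hb
      simp only [hgdef, dif_pos ha, dif_pos hb] at hab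
      exact Subtype.ext_iff.mp (hg0inj hab)
end

section
/- If a set S carries an extended pseudometric c and a function W: S → [0,∞] compatible with c (i.e. |W(s₁) − W(s₂)| ≤ c(s₁,s₂) for all s₁,s₂), then the bottleneck distance d_B is an extended pseudometric on the set of finite multisets on S. -/
open scoped Classical ENNReal

noncomputable section

/-- The cost of a matching `M` between multisets `A` and `B` on `S`: the supremum of the
costs `c` of matched pairs and of the weights `W` of unmatched elements. -/
def matchingCost {S : Type*} (c : S → S → ℝ≥0∞) (W : S → ℝ≥0∞)
    (A B : Multiset S) (M : Multiset (S × S)) : ℝ≥0∞ :=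
  (M.map fun p => c p.1 p.2).sup ⊔
    (((A - M.map Prod.fst) + (B - M.map Prod.snd)).map W).sup

/-- The bottleneck distance between (finite) multisets on `S`. -/
def bottleneck {S : Type*} (c : S → S → ℝ≥0∞) (W : S → ℝ≥0∞) (A B : Multiset S) : ℝ≥0∞ :=
  sInf {e | ∃ M : Multiset (S × S), M.map Prod.fst ≤ A ∧ M.map Prod.snd ≤ B ∧
    matchingCost c W A B M = e}

lemma le_sInf_add_sInf (a : ℝ≥0∞) (s t : Set ℝ≥0∞)
    (h : ∀ x ∈ s, ∀ y ∈ t, a ≤ x + y) : a ≤ sInf s + sInf t := by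
  rw [ENNReal.sInf_add]
  refine le_iInf₂ fun x hx => ?_
  rw [add_comm, ENNReal.sInf_add]
  refine le_iInf₂ fun y hy => ?_
  rw [add_comm]; exact h x hx y hy

lemma comp_exists {S : Type*} (M₁ : Multiset (S × S)) : ∀ M₂ : Multiset (S × S),
    ∃ N : Multiset (S × S × S),
      N.map (fun t => (t.1, t.2.1)) ≤ M₁ ∧ N.map (fun t => t.2) ≤ M₂ ∧
      ∀ b : S,
        Multiset.count b ((M₁ - N.map (fun t => (t.1, t.2.1))).map Prod.snd) = 0 ∨
        Multiset.count b ((M₂ - N.map (fun t => t.2)).map Prod.fst) = 0 := by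
  induction M₁ using Multiset.induction_on with
  | empty =>
    intro M₂
    exact ⟨0, by simp, by simp, by simp⟩
  | cons p M₁ ih =>
    intro M₂
    obtain ⟨a, b⟩ := p
    by_cases h : ∃ cc, (b, cc) ∈ M₂
    · obtain ⟨cc, hcc⟩ := h
      obtain ⟨N, h1, h2, h3⟩ := ih (M₂.erase (b, cc))
      refine ⟨(a, b, cc) ::ₘ N, ?_, ?_, ?_⟩
      · simpa using Multiset.cons_le_cons (a, b) h1
      · simp only [Multiset.map_cons]
        calc (b, cc) ::ₘ N.map (fun t => t.2)
            ≤ (b, cc) ::ₘ M₂.erase (b, cc) := Multiset.cons_le_cons _ h2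
          _ = M₂ := Multiset.cons_erase hcc
      · intro b'
        have e1 : (a, b) ::ₘ M₁ - ((a, b, cc) ::ₘ N).map (fun t => (t.1, t.2.1))
            = M₁ - N.map (fun t => (t.1, t.2.1)) := by
          simp [Multiset.sub_cons]
        have e2 : M₂ - ((a, b, cc) ::ₘ N).map (fun t => t.2)
            = M₂.erase (b, cc) - N.map (fun t => t.2) := by
          simp [Multiset.sub_cons]
        rw [e1, e2]
        exact h3 b'
    · obtain ⟨N, h1, h2, h3⟩ := ih M₂
      refine ⟨N, le_trans h1 (Multiset.le_cons_self _ _), h2, ?_⟩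
      intro b'
      have e1 : (a, b) ::ₘ M₁ - N.map (fun t => (t.1, t.2.1))
          = (a, b) ::ₘ (M₁ - N.map (fun t => (t.1, t.2.1))) :=
        Multiset.cons_sub_of_le _ h1
      rw [e1]
      by_cases hb : b' = b
      · right
        subst hb
        have hM2 : Multiset.count b' (M₂.map Prod.fst) = 0 := by
          rw [Multiset.count_eq_zero]
          intro hmem
          obtain ⟨q, hq, hq2⟩ := Multiset.mem_map.mp hmem
          refine h ⟨q.2, ?_⟩
          rw [← hq2]
          simpa using hq
        have hle : Multiset.count b' ((M₂ - N.map (fun t => t.2)).map Prod.fst)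
            ≤ Multiset.count b' (M₂.map Prod.fst) :=
          Multiset.count_le_of_le _ (Multiset.map_le_map (Multiset.sub_le_self _ _))
        omega
      · rcases h3 b' with h'|h'
        · left
          rw [Multiset.map_cons, Multiset.count_cons_of_ne hb]
          exact h'
        · right; exact h'

/-- If `c` is an extended pseudometric on `S` and `W : S → [0,∞]` is compatible with `c`,
then the bottleneck distance is an extended pseudometric on the multisets on `S`. -/
theorem stmt7 {S : Type*} (c : S → S → ℝ≥0∞) (W : S → ℝ≥0∞)
    (hrefl : ∀ s, c s s = 0) (hsymm : ∀ s₁ s₂, c s₁ s₂ = c s₂ s₁)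
    (htri : ∀ s₁ s₂ s₃, c s₁ s₃ ≤ c s₁ s₂ + c s₂ s₃)
    (hcompat : ∀ s₁ s₂, W s₁ ≤ W s₂ + c s₁ s₂) :
    (∀ A, bottleneck c W A A = 0) ∧
    (∀ A B, bottleneck c W A B = bottleneck c W B A) ∧
    (∀ A B C', bottleneck c W A C' ≤ bottleneck c W A B + bottleneck c W B C') := by
  refine ⟨?_, ?_, ?_⟩
  · -- reflexivity
    intro A
    refine le_antisymm (sInf_le ⟨A.map fun a => (a, a), ?_, ?_, ?_⟩) (zero_le)
    · simp [Multiset.map_map]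
    · simp [Multiset.map_map]
    · refine le_antisymm ?_ (zero_le)
      unfold matchingCost
      apply sup_le
      · apply Multiset.sup_le.mpr
        intro v hv
        rw [Multiset.map_map] at hv
        obtain ⟨a, _, rfl⟩ := Multiset.mem_map.mp hv
        simp [hrefl]
      · simp [Multiset.map_map, Function.comp]
  · -- symmetry
    intro A B
    have key : ∀ A B : Multiset S, bottleneck c W A B ≤ bottleneck c W B A := by
      intro A B
      apply sInf_le_sInf
      rintro e ⟨M, hMB, hMA, rfl⟩
      refine ⟨M.map Prod.swap, ?_, ?_, ?_⟩
      · simpa [Multiset.map_map, Function.comp] using hMA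
      · simpa [Multiset.map_map, Function.comp] using hMB
      · unfold matchingCost
        rw [Multiset.map_map, Multiset.map_map, Multiset.map_map]
        have h1 : ((fun p : S × S => c p.1 p.2) ∘ Prod.swap) = fun p : S × S => c p.1 p.2 := by
          funext p; exact (hsymm p.2 p.1)
        rw [h1]
        congr 1
        rw [add_comm]
        rfl
    exact le_antisymm (key A B) (key B A)
  · -- triangle
    intro A B C'
    refine le_sInf_add_sInf _ _ _ ?_
    rintro x ⟨M₁, h1A, h1B, rfl⟩ y ⟨M₂, h2B, h2C, rfl⟩
    have hc₁ : ∀ p ∈ M₁, c p.1 p.2 ≤ matchingCost c W A B M₁ := by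
      intro p hp; unfold matchingCost
      have hm : c p.1 p.2 ∈ M₁.map fun q => c q.1 q.2 := Multiset.mem_map_of_mem _ hp
      exact le_trans (Multiset.le_sup hm) le_sup_left
    have hc₂ : ∀ p ∈ M₂, c p.1 p.2 ≤ matchingCost c W B C' M₂ := by
      intro p hp; unfold matchingCost
      have hm : c p.1 p.2 ∈ M₂.map fun q => c q.1 q.2 := Multiset.mem_map_of_mem _ hp
      exact le_trans (Multiset.le_sup hm) le_sup_left
    have hWA₁ : ∀ a ∈ A - M₁.map Prod.fst, W a ≤ matchingCost c W A B M₁ := by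
      intro a ha; unfold matchingCost
      exact le_trans (Multiset.le_sup (Multiset.mem_map_of_mem _
        (Multiset.mem_add.mpr (Or.inl ha)))) le_sup_right
    have hWB₁ : ∀ b ∈ B - M₁.map Prod.snd, W b ≤ matchingCost c W A B M₁ := by
      intro b hb; unfold matchingCost
      exact le_trans (Multiset.le_sup (Multiset.mem_map_of_mem _
        (Multiset.mem_add.mpr (Or.inr hb)))) le_sup_right
    have hWB₂ : ∀ b ∈ B - M₂.map Prod.fst, W b ≤ matchingCost c W B C' M₂ := by
      intro b hb; unfold matchingCost
      exact le_trans (Multiset.le_sup (Multiset.mem_map_of_mem _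
        (Multiset.mem_add.mpr (Or.inl hb)))) le_sup_right
    have hWC₂ : ∀ b ∈ C' - M₂.map Prod.snd, W b ≤ matchingCost c W B C' M₂ := by
      intro b hb; unfold matchingCost
      exact le_trans (Multiset.le_sup (Multiset.mem_map_of_mem _
        (Multiset.mem_add.mpr (Or.inr hb)))) le_sup_right
    obtain ⟨N, hN1, hN2, hN3⟩ := comp_exists M₁ M₂
    set L₁ : Multiset (S × S) := M₁ - N.map (fun t => (t.1, t.2.1)) with hL₁
    set L₂ : Multiset (S × S) := M₂ - N.map (fun t => t.2) with hL₂
    have hM₁eq : M₁ = N.map (fun t => (t.1, t.2.1)) + L₁ := (add_tsub_cancel_of_le hN1).symm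
    have hM₂eq : M₂ = N.map (fun t => t.2) + L₂ := (add_tsub_cancel_of_le hN2).symm
    set M : Multiset (S × S) := N.map fun t => (t.1, t.2.2) with hMdef
    have hMfst : M.map Prod.fst = N.map fun t => t.1 := by
      rw [hMdef, Multiset.map_map]; rfl
    have hMsnd : M.map Prod.snd = N.map fun t => t.2.2 := by
      rw [hMdef, Multiset.map_map]; rfl
    have hMA : M.map Prod.fst ≤ A := by
      rw [hMfst]
      calc N.map (fun t => t.1)
          = (N.map fun t => (t.1, t.2.1)).map Prod.fst := by rw [Multiset.map_map]; rfl
        _ ≤ M₁.map Prod.fst := Multiset.map_le_map hN1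
        _ ≤ A := h1A
    have hMC : M.map Prod.snd ≤ C' := by
      rw [hMsnd]
      calc N.map (fun t => t.2.2)
          = (N.map fun t => t.2).map Prod.snd := by rw [Multiset.map_map]; rfl
        _ ≤ M₂.map Prod.snd := Multiset.map_le_map hN2
        _ ≤ C' := h2C
    refine le_trans (sInf_le ⟨M, hMA, hMC, rfl⟩) ?_
    -- count splittings
    have hsplit1f : ∀ s : S, Multiset.count s (M₁.map Prod.fst)
        = Multiset.count s (M.map Prod.fst) + Multiset.count s (L₁.map Prod.fst) := by
      intro s
      conv_lhs => rw [hM₁eq]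
      rw [Multiset.map_add, Multiset.count_add, hMfst, Multiset.map_map]; rfl
    have hsplit1s : ∀ s : S, Multiset.count s (M₁.map Prod.snd)
        = Multiset.count s (N.map fun t => t.2.1) + Multiset.count s (L₁.map Prod.snd) := by
      intro s
      conv_lhs => rw [hM₁eq]
      rw [Multiset.map_add, Multiset.count_add, Multiset.map_map]; rfl
    have hsplit2f : ∀ s : S, Multiset.count s (M₂.map Prod.fst)
        = Multiset.count s (N.map fun t => t.2.1) + Multiset.count s (L₂.map Prod.fst) := by
      intro s
      conv_lhs => rw [hM₂eq]
      rw [Multiset.map_add, Multiset.count_add, Multiset.map_map]; rfl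
    have hsplit2s : ∀ s : S, Multiset.count s (M₂.map Prod.snd)
        = Multiset.count s (M.map Prod.snd) + Multiset.count s (L₂.map Prod.snd) := by
      intro s
      conv_lhs => rw [hM₂eq]
      rw [Multiset.map_add, Multiset.count_add, hMsnd, Multiset.map_map]; rfl
    conv_lhs => unfold matchingCost
    apply sup_le
    · apply Multiset.sup_le.mpr
      intro v hv
      obtain ⟨p, hp, rfl⟩ := Multiset.mem_map.mp hv
      rw [hMdef] at hp
      obtain ⟨t, ht, rfl⟩ := Multiset.mem_map.mp hp
      calc c t.1 t.2.2 ≤ c t.1 t.2.1 + c t.2.1 t.2.2 := htri _ _ _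
        _ ≤ _ + _ := add_le_add
            (hc₁ _ (Multiset.mem_of_le hN1 (Multiset.mem_map_of_mem _ ht)))
            (hc₂ _ (Multiset.mem_of_le hN2 (Multiset.mem_map_of_mem _ ht)))
    · apply Multiset.sup_le.mpr
      intro v hv
      obtain ⟨s, hs, rfl⟩ := Multiset.mem_map.mp hv
      rcases Multiset.mem_add.mp hs with hsA | hsC
      · -- s unmatched in A
        by_cases hA1 : s ∈ A - M₁.map Prod.fst
        · exact le_trans (hWA₁ s hA1) le_self_add
        · have hcA : Multiset.count s A ≤ Multiset.count s (M₁.map Prod.fst) := by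
            by_contra hlt
            push_neg at hlt
            exact hA1 (Multiset.count_pos.mp (by rw [Multiset.count_sub]; omega))
          have hcM : Multiset.count s (M.map Prod.fst) < Multiset.count s A := by
            have h0 := Multiset.count_pos.mpr hsA
            rw [Multiset.count_sub] at h0; omega
          have hL1pos : 0 < Multiset.count s (L₁.map Prod.fst) := by
            have := hsplit1f s; omega
          obtain ⟨p, hpL, hp1⟩ := Multiset.mem_map.mp (Multiset.count_pos.mp hL1pos)
          have hpM₁ : p ∈ M₁ := Multiset.mem_of_le (Multiset.sub_le_self _ _) hpL
          have hbL1 : 0 < Multiset.count p.2 (L₁.map Prod.snd) :=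
            Multiset.count_pos.mpr (Multiset.mem_map_of_mem _ hpL)
          have hbL2 : Multiset.count p.2 (L₂.map Prod.fst) = 0 := by
            rcases hN3 p.2 with h'|h'
            · omega
            · exact h'
          have hBcount : Multiset.count p.2 (M₁.map Prod.snd) ≤ Multiset.count p.2 B :=
            Multiset.count_le_of_le _ h1B
          have hbmem : p.2 ∈ B - M₂.map Prod.fst := by
            apply Multiset.count_pos.mp
            rw [Multiset.count_sub]
            have e1 := hsplit1s p.2
            have e2 := hsplit2f p.2
            omega
          calc W s ≤ W p.2 + c s p.2 := hcompat _ _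
            _ = W p.2 + c p.1 p.2 := by rw [hp1]
            _ ≤ matchingCost c W B C' M₂ + matchingCost c W A B M₁ :=
                add_le_add (hWB₂ _ hbmem) (hc₁ p hpM₁)
            _ = _ := add_comm _ _
      · -- s unmatched in C'
        by_cases hC2 : s ∈ C' - M₂.map Prod.snd
        · exact le_trans (hWC₂ s hC2) le_add_self
        · have hcC : Multiset.count s C' ≤ Multiset.count s (M₂.map Prod.snd) := by
            by_contra hlt
            push_neg at hlt
            exact hC2 (Multiset.count_pos.mp (by rw [Multiset.count_sub]; omega))
          have hcM : Multiset.count s (M.map Prod.snd) < Multiset.count s C' := by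
            have h0 := Multiset.count_pos.mpr hsC
            rw [Multiset.count_sub] at h0; omega
          have hL2pos : 0 < Multiset.count s (L₂.map Prod.snd) := by
            have := hsplit2s s; omega
          obtain ⟨p, hpL, hp2⟩ := Multiset.mem_map.mp (Multiset.count_pos.mp hL2pos)
          have hpM₂ : p ∈ M₂ := Multiset.mem_of_le (Multiset.sub_le_self _ _) hpL
          have hbL2 : 0 < Multiset.count p.1 (L₂.map Prod.fst) :=
            Multiset.count_pos.mpr (Multiset.mem_map_of_mem _ hpL)
          have hbL1 : Multiset.count p.1 (L₁.map Prod.snd) = 0 := by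
            rcases hN3 p.1 with h'|h'
            · exact h'
            · omega
          have hBcount : Multiset.count p.1 (M₂.map Prod.fst) ≤ Multiset.count p.1 B :=
            Multiset.count_le_of_le _ h2B
          have hbmem : p.1 ∈ B - M₁.map Prod.snd := by
            apply Multiset.count_pos.mp
            rw [Multiset.count_sub]
            have e1 := hsplit1s p.1
            have e2 := hsplit2f p.1
            omega
          calc W s ≤ W p.1 + c s p.1 := hcompat _ _
            _ = W p.1 + c p.1 p.2 := by rw [hsymm, hp2]
            _ ≤ matchingCost c W A B M₁ + matchingCost c W B C' M₂ :=
                add_le_add (hWB₁ _ hbmem) (hc₂ p hpM₂)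

end
end
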